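/- If a partial order (X,≼) has a countable multi-utility, then it has a countable injective monotone multi-utility, i.e., a countable multi-utility every member of which is an injective monotone. -/
import Mathlib


/-- A binary relation is a partial order: reflexive, antisymmetric, transitive. -/
def IsPartialOrderRel {X : Type*} (r : X → X → Prop) : Prop :=
  (∀ x, r x x) ∧ (∀ x y, r x y → r y x → x = y) ∧ (∀ x y z, r x y → r y z → r x z)

/-- `r'` extends `r`. -/
def RelExtends {X : Type*} (r r' : X → X → Prop) : Prop :=
  ∀ x y, r x y → r' x y

/-- `r` is total: any two elements are comparable. -/
def TotalRel {X : Type*} (r : X → X → Prop) : Prop :=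
  ∀ x y, r x y ∨ r y x

/-- `r'` is a linear extension of `r`: a total partial order extending `r`. -/
def IsLinearExtension {X : Type*} (r r' : X → X → Prop) : Prop :=
  IsPartialOrderRel r' ∧ TotalRel r' ∧ RelExtends r r'

/-- `x` and `y` are incomparable with respect to `r`. -/
def Incomp {X : Type*} (r : X → X → Prop) (x y : X) : Prop :=
  ¬ r x y ∧ ¬ r y x

/-- `D` is Debreu dense for `r`. -/
def DebreuDense {X : Type*} (r : X → X → Prop) (D : Set X) : Prop :=
  ∀ x y, r x y → ¬ r y x → ∃ d ∈ D, r x d ∧ r d y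

/-- `(X, r)` is Debreu separable: it has a countable Debreu dense subset. -/
def DebreuSeparable {X : Type*} (r : X → X → Prop) : Prop :=
  ∃ D : Set X, D.Countable ∧ DebreuDense r D

/-- The limit of a sequence of binary relations. -/
def LimitRel {X : Type*} (r : ℕ → X → X → Prop) : X → X → Prop :=
  fun x y => ∃ n₀ : ℕ, ∀ n, n₀ ≤ n → r n x y


private lemma auxGeomTailSummable (k : ℕ) : Summable (fun n : ℕ => (1/3:ℝ)^(n+k)) := by
  simpa [pow_add] using
    (summable_geometric_of_lt_one (by norm_num : (0:ℝ) ≤ 1/3) (by norm_num)).mul_right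
      ((1/3:ℝ)^k)

private lemma auxGeomTail (k : ℕ) : ∑' n : ℕ, (1/3:ℝ)^(n+k) = (3/2) * (1/3:ℝ)^k := by
  rw [show (fun n : ℕ => (1/3:ℝ)^(n+k)) = fun n : ℕ => (1/3:ℝ)^n * (1/3:ℝ)^k by
    funext n; rw [pow_add]]
  rw [tsum_mul_right, tsum_geometric_of_lt_one (by norm_num : (0:ℝ) ≤ 1/3) (by norm_num)]
  norm_num

private lemma auxDigitSummable (a : ℕ → ℝ) (ha : ∀ n, a n = 0 ∨ a n = 1) :
    Summable (fun n : ℕ => (1/3:ℝ)^n * a n) := by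
  refine Summable.of_nonneg_of_le (fun n => ?_) (fun n => ?_)
    (summable_geometric_of_lt_one (by norm_num : (0:ℝ) ≤ 1/3) (by norm_num))
  · rcases ha n with h | h <;> simp [h]
  · rcases ha n with h | h <;> simp [h]

private lemma auxKey (a b : ℕ → ℝ)
    (ha : ∀ n, a n = 0 ∨ a n = 1) (hb : ∀ n, b n = 0 ∨ b n = 1)
    (n₀ : ℕ) (heq : ∀ n < n₀, a n = b n) (han : a n₀ = 1) (hbn : b n₀ = 0) :
    ∑' n : ℕ, (1/3:ℝ)^n * b n < ∑' n : ℕ, (1/3:ℝ)^n * a n := by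
  have sA := auxDigitSummable a ha
  have sB := auxDigitSummable b hb
  have splitA := Summable.sum_add_tsum_nat_add (f := fun n : ℕ => (1/3:ℝ)^n * a n) (n₀+1) sA
  have splitB := Summable.sum_add_tsum_nat_add (f := fun n : ℕ => (1/3:ℝ)^n * b n) (n₀+1) sB
  have tailA_nonneg : (0:ℝ) ≤ ∑' n : ℕ, (1/3:ℝ)^(n+(n₀+1)) * a (n+(n₀+1)) := by
    apply tsum_nonneg
    intro n; rcases ha (n+(n₀+1)) with h | h <;> simp [h]
  have tailB_le : ∑' n : ℕ, (1/3:ℝ)^(n+(n₀+1)) * b (n+(n₀+1)) ≤ (3/2) * (1/3:ℝ)^(n₀+1) := by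
    rw [← auxGeomTail (n₀+1)]
    apply Summable.tsum_le_tsum _ _ (auxGeomTailSummable (n₀+1))
    · intro n; rcases hb (n+(n₀+1)) with h | h <;> simp [h]
    · exact (sB.comp_injective (add_left_injective (n₀+1)))
  have headA : ∑ i ∈ Finset.range (n₀+1), (1/3:ℝ)^i * a i
      = (∑ i ∈ Finset.range n₀, (1/3:ℝ)^i * a i) + (1/3:ℝ)^n₀ := by
    rw [Finset.sum_range_succ, han, mul_one]
  have headB : ∑ i ∈ Finset.range (n₀+1), (1/3:ℝ)^i * b i
      = ∑ i ∈ Finset.range n₀, (1/3:ℝ)^i * a i := by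
    rw [Finset.sum_range_succ, hbn, mul_zero, add_zero]
    exact Finset.sum_congr rfl (fun i hi => by rw [heq i (Finset.mem_range.mp hi)])
  have hpow : (3/2) * (1/3:ℝ)^(n₀+1) < (1/3:ℝ)^n₀ := by
    rw [pow_succ]
    have : (0:ℝ) < (1/3:ℝ)^n₀ := by positivity
    nlinarith
  rw [← splitA, ← splitB, headA, headB]
  linarith

private lemma auxDigitEq (a b : ℕ → ℝ)
    (ha : ∀ n, a n = 0 ∨ a n = 1) (hb : ∀ n, b n = 0 ∨ b n = 1)
    (hs : ∑' n : ℕ, (1/3:ℝ)^n * a n = ∑' n : ℕ, (1/3:ℝ)^n * b n) : a = b := by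
  by_contra h
  have hne : ∃ n, a n ≠ b n := Function.ne_iff.mp h
  classical
  have hn₀ : a (Nat.find hne) ≠ b (Nat.find hne) := Nat.find_spec hne
  have heq : ∀ n < Nat.find hne, a n = b n := fun n hn => not_not.mp (Nat.find_min hne hn)
  rcases ha (Nat.find hne) with h1 | h1 <;> rcases hb (Nat.find hne) with h2 | h2
  · exact hn₀ (h1.trans h2.symm)
  · exact (auxKey b a hb ha _ (fun n hn => (heq n hn).symm) h2 h1).ne hs
  · exact (auxKey a b ha hb _ heq h1 h2).ne hs.symm
  · exact hn₀ (h1.trans h2.symm)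

theorem countable_multiUtility_to_injectiveMonotoneMultiUtility {X : Type*}
    (r : X → X → Prop) (hr : IsPartialOrderRel r)
    (I : Type*) [Countable I] (u : I → X → ℝ)
    (hu : ∀ x y, r x y ↔ ∀ i, u i x ≤ u i y) :
    ∃ (J : Type) (v : J → X → ℝ), Countable J ∧
      (∀ x y, r x y ↔ ∀ j, v j x ≤ v j y) ∧
      (∀ j, Function.Injective (v j)) ∧
      (∀ j x y, r x y → v j x ≤ v j y) := by
  classical
  obtain ⟨-, hanti, -⟩ := hr
  obtain ⟨e, he⟩ := exists_injective_nat (I × ℚ)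
  set f : I × ℚ → ℕ := fun j => e j + 1 with hf
  have hfinj : Function.Injective f := fun p q h => he (by simpa [hf] using h)
  set χ : I × ℚ → X → ℝ := fun j x => if (j.2 : ℝ) < u j.1 x then 1 else 0 with hχ
  have hχ01 : ∀ j x, χ j x = 0 ∨ χ j x = 1 := by
    intro j x; by_cases h : (j.2 : ℝ) < u j.1 x <;> simp [hχ, h]
  have hχmono : ∀ j x y, r x y → χ j x ≤ χ j y := by
    intro j x y hxy
    have hle := (hu x y).mp hxy j.1
    by_cases h : (j.2 : ℝ) < u j.1 x
    · simp [hχ, h, lt_of_lt_of_le h hle]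
    · rcases hχ01 j y with h' | h' <;> rw [h'] <;> simp [hχ, h]
  have hχsep : ∀ x y, ¬ r x y → ∃ j, χ j x = 1 ∧ χ j y = 0 := by
    intro x y hxy
    rw [hu] at hxy; push_neg at hxy
    obtain ⟨i, hi⟩ := hxy
    obtain ⟨q, hq1, hq2⟩ := exists_rat_btwn hi
    exact ⟨(i, q), by simp [hχ, hq2], by simp [hχ, not_lt.mpr hq1.le]⟩
  have hχr : ∀ x y, (∀ j, χ j x ≤ χ j y) → r x y := by
    intro x y h
    by_contra hxy
    obtain ⟨j, h1, h0⟩ := hχsep x y hxy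
    have := h j
    rw [h1, h0] at this
    norm_num at this
  -- digits
  set a : X → ℕ → ℝ := fun x => Function.extend f (fun j => χ j x) 0 with ha
  have hax : ∀ x j, a x (f j) = χ j x := fun x j => hfinj.extend_apply _ _ j
  have ha_off : ∀ x n, n ∉ Set.range f → a x n = 0 := by
    intro x n hn
    exact Function.extend_apply' _ _ _ (by simpa using hn)
  have ha01 : ∀ x n, a x n = 0 ∨ a x n = 1 := by
    intro x n
    by_cases hn : n ∈ Set.range f
    · obtain ⟨j, rfl⟩ := hn; rw [hax]; exact hχ01 j x
    · exact Or.inl (ha_off x n hn)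
  have hamono : ∀ x y, r x y → ∀ n, a x n ≤ a y n := by
    intro x y hxy n
    by_cases hn : n ∈ Set.range f
    · obtain ⟨j, rfl⟩ := hn; rw [hax, hax]; exact hχmono j x y hxy
    · rw [ha_off x n hn, ha_off y n hn]
  have sa : ∀ x, Summable (fun n : ℕ => (1/3:ℝ)^n * a x n) :=
    fun x => auxDigitSummable (a x) (ha01 x)
  set c : X → ℝ := fun x => ∑' n : ℕ, (1/3:ℝ)^n * a x n with hc
  have hc_nonneg : ∀ x, 0 ≤ c x := by
    intro x
    apply tsum_nonneg
    intro n; rcases ha01 x n with h | h <;> simp [h]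
  have hc_le : ∀ x, c x ≤ 1/2 := by
    intro x
    have h0 : a x 0 = 0 := ha_off x 0 (by rintro ⟨j, hj⟩; simp [hf] at hj)
    have split := Summable.sum_add_tsum_nat_add (f := fun n : ℕ => (1/3:ℝ)^n * a x n) 1 (sa x)
    have htail : ∑' n : ℕ, (1/3:ℝ)^(n+1) * a x (n+1) ≤ (3/2) * (1/3:ℝ)^1 := by
      rw [← auxGeomTail 1]
      apply Summable.tsum_le_tsum _ _ (auxGeomTailSummable 1)
      · intro n; rcases ha01 x (n+1) with h | h <;> simp [h]
      · exact ((sa x).comp_injective (add_left_injective 1))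
    have hcx : c x = (1/3:ℝ)^0 * a x 0 + ∑' n : ℕ, (1/3:ℝ)^(n+1) * a x (n+1) := by
      rw [show ((1/3:ℝ)^0 * a x 0) = ∑ i ∈ Finset.range 1, (1/3:ℝ)^i * a x i by simp]
      exact split.symm
    rw [hcx, h0]
    norm_num at htail ⊢
    linarith
  have hc_mono : ∀ x y, r x y → c x ≤ c y :=
    fun x y hxy => Summable.tsum_le_tsum
      (fun n => mul_le_mul_of_nonneg_left (hamono x y hxy n) (by positivity)) (sa x) (sa y)
  have hc_inj : Function.Injective c := by
    intro x y hxy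
    have hdig : a x = a y := auxDigitEq (a x) (a y) (ha01 x) (ha01 y) hxy
    have hχeq : ∀ j, χ j x = χ j y := by
      intro j
      rw [← hax x j, ← hax y j, hdig]
    exact hanti x y (hχr x y (fun j => (hχeq j).le)) (hχr y x (fun j => (hχeq j).ge))
  -- the family
  refine ⟨ℕ, fun n x => a x n + c x, inferInstance, ?_, ?_, ?_⟩
  · intro x y
    constructor
    · intro hxy n
      exact add_le_add (hamono x y hxy n) (hc_mono x y hxy)
    · intro h
      by_contra hxy
      obtain ⟨j, h1, h0⟩ := hχsep x y hxy
      have := h (f j)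
      simp only [hax, h1, h0] at this
      have := hc_le y
      have := hc_nonneg x
      linarith
  · intro n x y hxy
    simp only at hxy
    have h1 := hc_nonneg x
    have h2 := hc_nonneg y
    have h3 := hc_le x
    have h4 := hc_le y
    have haeq : a x n = a y n := by
      rcases ha01 x n with h | h <;> rcases ha01 y n with h' | h' <;>
        rw [h, h'] at hxy ⊢ <;> first | rfl | (exfalso; linarith)
    apply hc_inj
    rw [haeq] at hxy
    linarith
  · intro n x y hxy
    exact add_le_add (hamono x y hxy n) (hc_mono x y hxy)
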